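/- For each positive integer n, the sum over all binary trees T with n vertices of the product over all vertices v of T of (1 + 1/(2 h_v))^(h_v - 1) equals (2n+1)^(n-1) / n!. -/

import Mathlib

/-- A binary tree: `nil` is the empty tree, `node l r` is a vertex with
(possibly empty) left subtree `l` and right subtree `r`. -/
inductive BinTree where
  | nil : BinTree
  | node : BinTree → BinTree → BinTree

/-- Number of vertices of a binary tree. -/
def BinTree.size : BinTree → ℕ
  | .nil => 0
  | .node l r => l.size + r.size + 1

/-- The multiset of hook lengths of the vertices of a binary tree
(the hook length of a vertex is the number of vertices of the subtree
rooted at it, including itself). -/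
def BinTree.hooks : BinTree → Multiset ℕ
  | .nil => 0
  | .node l r => (BinTree.node l r).size ::ₘ (l.hooks + r.hooks)

deriving instance DecidableEq for BinTree

noncomputable def W (T : BinTree) : ℝ :=
  ((T.hooks).map (fun h => ((1 : ℝ) + 1 / (2 * h)) ^ (h - 1))).prod

lemma W_nil : W BinTree.nil = 1 := by simp [W, BinTree.hooks]

lemma W_node (l r : BinTree) :
    W (BinTree.node l r) =
      ((1 : ℝ) + 1 / (2 * (l.size + r.size + 1))) ^ (l.size + r.size) * (W l * W r) := by
  simp [W, BinTree.hooks, BinTree.size]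
  exact Or.inl (by norm_cast)
def allTrees : ℕ → Finset BinTree
  | 0 => {BinTree.nil}
  | n+1 => (Finset.range (n+1)).attach.biUnion (fun a =>
      ((allTrees a.1) ×ˢ (allTrees (n - a.1))).image fun p => BinTree.node p.1 p.2)
  decreasing_by
    · exact Nat.lt_succ_of_le (Nat.le_of_lt_succ (Finset.mem_range.mp a.2))
    · exact Nat.lt_succ_of_le (Nat.sub_le n a.1)

noncomputable def F (n : ℕ) : ℝ := ∑ T ∈ allTrees n, W T

lemma F_zero : F 0 = 1 := by simp [F, allTrees, W_nil]

lemma size_eq_of_mem {n : ℕ} {T : BinTree} (h : T ∈ allTrees n) : T.size = n := by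
  induction T generalizing n with
  | nil =>
    match n with
    | 0 => rfl
    | n+1 =>
      simp only [allTrees, Finset.mem_biUnion, Finset.mem_image, Finset.mem_product] at h
      obtain ⟨a, _, p, _, hp⟩ := h
      exact absurd hp (by simp)
  | node l r ihl ihr =>
    match n with
    | 0 => simp only [allTrees, Finset.mem_singleton] at h; exact absurd h (by simp)
    | n+1 =>
      simp only [allTrees, Finset.mem_biUnion, Finset.mem_image, Finset.mem_product] at h
      obtain ⟨a, _, p, ⟨h1, h2⟩, hp⟩ := h
      obtain ⟨rfl, rfl⟩ : p.1 = l ∧ p.2 = r := by cases hp; exact ⟨rfl, rfl⟩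
      have := ihl h1; have := ihr h2
      have ha := Finset.mem_range.mp a.2
      simp only [BinTree.size]; omega

lemma mem_allTrees {n : ℕ} {T : BinTree} : T ∈ allTrees n ↔ T.size = n := by
  constructor
  · exact size_eq_of_mem
  · intro h
    induction T generalizing n with
    | nil => subst h; simp [allTrees, BinTree.size]
    | node l r ihl ihr =>
      simp only [BinTree.size] at h
      subst h
      simp only [allTrees, Finset.mem_biUnion, Finset.mem_image, Finset.mem_product,
        Finset.mem_attach, true_and, Subtype.exists, Finset.mem_range]
      refine ⟨l.size, by omega, ⟨(l, r), ⟨ihl rfl, ?_⟩, rfl⟩⟩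
      have : l.size + r.size - l.size = r.size := by omega
      rw [this]; exact ihr rfl

lemma F_succ (n : ℕ) :
    F (n + 1) = ((1 : ℝ) + 1 / (2 * (n + 1))) ^ n * ∑ k ∈ Finset.range (n+1), F k * F (n - k) := by
  rw [F, allTrees, Finset.sum_biUnion]
  · rw [Finset.mul_sum, ← Finset.sum_attach (Finset.range (n+1))
      (fun k => ((1 : ℝ) + 1 / (2 * (n + 1))) ^ n * (F k * F (n - k)))]
    refine Finset.sum_congr rfl fun a _ => ?_
    rw [Finset.sum_image]
    · rw [Finset.sum_product]
      have ha := Finset.mem_range.mp a.2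
      have key : ∀ p ∈ (allTrees a.1) ×ˢ (allTrees (n - a.1)),
          W (BinTree.node p.1 p.2)
            = ((1 : ℝ) + 1 / (2 * (n + 1))) ^ n * (W p.1 * W p.2) := by
        rintro ⟨l, r⟩ hp
        rw [Finset.mem_product] at hp
        have h1 := size_eq_of_mem hp.1
        have h2 := size_eq_of_mem hp.2
        rw [W_node, h1, h2]
        have e1 : a.1 + (n - a.1) = n := by omega
        rw [show ((a.1 : ℝ) + ((n - a.1 : ℕ) : ℝ) + 1) = ((n : ℝ) + 1) by
          rw [Nat.cast_sub (by omega : a.1 ≤ n)]; ring, e1]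
      rw [F, F, Finset.sum_mul_sum, Finset.mul_sum]
      refine Finset.sum_congr rfl fun l hl => ?_
      rw [Finset.mul_sum]
      refine Finset.sum_congr rfl fun r hr => ?_
      exact key (l, r) (Finset.mem_product.mpr ⟨hl, hr⟩)
    · rintro ⟨l, r⟩ _ ⟨l', r'⟩ _ h
      cases h; rfl
  · rintro a _ b _ hab
    simp only [Function.onFun, Finset.disjoint_left]
    rintro T hT hT'
    simp only [Finset.mem_image, Finset.mem_product] at hT hT'
    obtain ⟨p, ⟨hp1, _⟩, rfl⟩ := hT
    obtain ⟨q, ⟨hq1, _⟩, hq⟩ := hT'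
    have h1 : q.1 = p.1 := by injection hq
    have e1 := size_eq_of_mem hp1
    have e2 := size_eq_of_mem hq1
    rw [h1] at e2
    exact hab (Subtype.ext (e1.symm.trans e2))


lemma fd_pow_zero : ∀ (n m : ℕ), m < n → ∀ x : ℝ, (fwdDiff (1:ℝ))^[n] (fun t => (x+t)^m) = 0 := by
  intro n
  induction n with
  | zero => omega
  | succ n ih =>
    intro m hm x
    rw [Function.iterate_succ_apply]
    have hΔ : fwdDiff (1:ℝ) (fun t => (x+t)^m)
        = ∑ j ∈ Finset.range m, (m.choose j : ℝ) • (fun t : ℝ => (x+t)^j) := by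
      funext t
      simp only [fwdDiff, Finset.sum_apply, Pi.smul_apply, smul_eq_mul]
      have h1 : (x + (t+1))^m = ∑ j ∈ Finset.range (m+1), (x+t)^j * (m.choose j : ℝ) := by
        rw [show x + (t+1) = (x+t) + 1 by ring, add_pow]
        simp
      rw [h1, Finset.sum_range_succ]
      simp [mul_comm]
    rw [hΔ, fwdDiff_iter_finset_sum]
    refine Finset.sum_eq_zero fun j hj => ?_
    have hj' := Finset.mem_range.mp hj
    rw [fwdDiff_iter_const_smul, ih j (by omega : j < n) x, smul_zero]

lemma alt_sum (n : ℕ) (hn : 1 ≤ n) (x : ℝ) :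
    ∑ k ∈ Finset.range (n+1), (-1:ℝ)^(n-k) * (n.choose k) * (x+k)^(n-1) = 0 := by
  have h := fwdDiff_iter_eq_sum_shift (1:ℝ) (fun t => (x+t)^(n-1)) n 0
  rw [fd_pow_zero n (n-1) (by omega) x] at h
  simp only [Pi.zero_apply, zero_add, nsmul_eq_mul, mul_one, zsmul_eq_mul] at h
  rw [eq_comm] at h
  convert h using 2 with k
  push_cast
  ring

noncomputable def g (k : ℕ) : ℝ := (1/2 + k)^k / (2*k+1)

lemma g_zero : g 0 = 1 := by norm_num [g]

lemma abel1 : ∀ (m : ℕ) (y : ℝ),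
    (∑ k ∈ Finset.range (m+1), ((m.choose k : ℝ) * g k) * (y + ((m-k:ℕ):ℝ))^(m-k))
      = (1/2 + y + m)^m := by
  intro m
  induction m with
  | zero => intro y; simp [g_zero]
  | succ m ih =>
    have hterm : ∀ (k : ℕ) (y : ℝ),
        HasDerivAt (fun y : ℝ => (((m+1).choose k : ℝ) * g k) * (y + ((m+1-k:ℕ):ℝ))^(m+1-k))
          ((((m+1).choose k : ℝ) * g k) * ((m+1-k : ℕ) * (y + ((m+1-k:ℕ):ℝ))^(m+1-k-1))) y := by
      intro k y
      have h0 : HasDerivAt (fun y : ℝ => (y + ((m+1-k:ℕ):ℝ))) 1 y := (hasDerivAt_id y).add_const _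
      simpa [mul_one] using (h0.pow (m+1-k)).const_mul (((m+1).choose k : ℝ) * g k)
    have hL : ∀ y : ℝ, HasDerivAt
        (fun y : ℝ => ∑ k ∈ Finset.range (m+2),
          (((m+1).choose k : ℝ) * g k) * (y + ((m+1-k:ℕ):ℝ))^(m+1-k))
        (∑ k ∈ Finset.range (m+2),
          (((m+1).choose k : ℝ) * g k) * ((m+1-k : ℕ) * (y + ((m+1-k:ℕ):ℝ))^(m+1-k-1))) y :=
      fun y => HasDerivAt.fun_sum (fun k _ => hterm k y)
    have hR : ∀ y : ℝ, HasDerivAt (fun y : ℝ => (1/2 + y + ((m+1:ℕ):ℝ))^(m+1))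
        (((m+1:ℕ):ℝ) * (1/2 + y + ((m+1:ℕ):ℝ))^m) y := by
      intro y
      have h0 : HasDerivAt (fun y : ℝ => 1/2 + y + ((m+1:ℕ):ℝ)) 1 y :=
        ((hasDerivAt_id y).const_add (1/2)).add_const _
      simpa [mul_one] using h0.fun_pow (m+1)
    have hderiv_eq : ∀ y : ℝ,
        (∑ k ∈ Finset.range (m+2),
          (((m+1).choose k : ℝ) * g k) * ((m+1-k : ℕ) * (y + ((m+1-k:ℕ):ℝ))^(m+1-k-1)))
          = ((m+1:ℕ):ℝ) * (1/2 + y + ((m+1:ℕ):ℝ))^m := by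
      intro y
      rw [Finset.sum_range_succ]
      simp only [Nat.sub_self, Nat.cast_zero, zero_mul, mul_zero, add_zero]
      have hih := ih (y+1)
      rw [show (1/2 + y + ((m+1:ℕ):ℝ)) = (1/2 + (y+1) + (m:ℝ)) by push_cast; ring, ← hih,
        Finset.mul_sum]
      refine Finset.sum_congr rfl fun k hk => ?_
      have hk' : k ≤ m := by have := Finset.mem_range.mp hk; omega
      have e1 : m+1-k = (m-k)+1 := by omega
      have e2 : m+1-k-1 = m-k := by omega
      have e3 : ((m+1).choose k : ℝ) * (((m-k:ℕ):ℝ) + 1) = (m.choose k : ℝ) * ((m+1:ℕ):ℝ) := by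
        have h := Nat.choose_mul_succ_eq m k
        rw [e1] at h
        exact_mod_cast h.symm
      rw [e2, e1]
      push_cast
      rw [show y + (((m-k:ℕ):ℝ) + 1) = (y+1) + ((m-k:ℕ):ℝ) by ring]
      push_cast at e3
      linear_combination (g k * ((y + 1) + ((m-k:ℕ):ℝ))^(m-k)) * e3
    set y₀ : ℝ := -(1/2) - (m+1) with hy₀
    have hval : (∑ k ∈ Finset.range (m+2),
        (((m+1).choose k : ℝ) * g k) * (y₀ + ((m+1-k:ℕ):ℝ))^(m+1-k)) = 0 := by
      have halt := alt_sum (m+1) (by omega) (1/2)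
      rw [show m+1-1 = m from rfl] at halt
      calc (∑ k ∈ Finset.range (m+2),
            (((m+1).choose k : ℝ) * g k) * (y₀ + ((m+1-k:ℕ):ℝ))^(m+1-k))
          = ∑ k ∈ Finset.range (m+2),
            (1/2) * ((-1:ℝ)^(m+1-k) * ((m+1).choose k : ℝ) * (1/2 + (k:ℝ))^m) := by
            refine Finset.sum_congr rfl fun k hk => ?_
            have hk' : k ≤ m+1 := by have := Finset.mem_range.mp hk; omega
            have hbase : y₀ + ((m+1-k:ℕ):ℝ) = -(1/2 + k) := by
              rw [Nat.cast_sub hk']; push_cast; ring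
            rw [hbase, neg_pow]
            have hg : g k * (1/2 + (k:ℝ))^(m+1-k) = (1/2) * (1/2 + (k:ℝ))^m := by
              rw [g, div_mul_eq_mul_div, ← pow_add, show k + (m+1-k) = m+1 by omega,
                div_eq_iff (by positivity : (2*(k:ℝ)+1) ≠ 0), pow_succ]
              ring
            linear_combination ((-1:ℝ)^(m+1-k) * (((m+1).choose k : ℝ))) * hg
        _ = 0 := by rw [← Finset.mul_sum, halt, mul_zero]
    intro y
    have hdiff : Differentiable ℝ (fun y : ℝ =>
        (∑ k ∈ Finset.range (m+2),
          (((m+1).choose k : ℝ) * g k) * (y + ((m+1-k:ℕ):ℝ))^(m+1-k))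
        - (1/2 + y + ((m+1:ℕ):ℝ))^(m+1)) :=
      fun y => ((hL y).sub (hR y)).differentiableAt
    have hd0 : ∀ y : ℝ, deriv (fun y : ℝ =>
        (∑ k ∈ Finset.range (m+2),
          (((m+1).choose k : ℝ) * g k) * (y + ((m+1-k:ℕ):ℝ))^(m+1-k))
        - (1/2 + y + ((m+1:ℕ):ℝ))^(m+1)) y = 0 := by
      intro y
      rw [((hL y).fun_sub (hR y)).deriv, hderiv_eq, sub_self]
    have hconst := is_const_of_deriv_eq_zero hdiff hd0 y y₀
    have hR0 : (1/2 + y₀ + ((m+1:ℕ):ℝ))^(m+1) = 0 := by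
      rw [show (1/2 + y₀ + ((m+1:ℕ):ℝ)) = 0 by rw [hy₀]; push_cast; ring]
      exact zero_pow (by omega)
    rw [hval, hR0, sub_zero] at hconst
    exact sub_eq_zero.mp hconst

lemma hgj (j : ℕ) : ((1:ℝ)/2 + j)^j = (2*(j:ℝ)+1) * g j := by
  rw [g, mul_div_cancel₀]
  positivity

lemma B_eq (m : ℕ) :
    ∑ k ∈ Finset.range (m+1), (m.choose k : ℝ) * g k * g (m-k) = ((m:ℝ)+1)^m / ((m:ℝ)+1) := by
  have hS1 : ∑ k ∈ Finset.range (m+1),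
      (m.choose k : ℝ) * g k * ((2*((m-k:ℕ):ℝ)+1) * g (m-k)) = ((m:ℝ)+1)^m := by
    have h := abel1 m (1/2)
    rw [show ((1:ℝ)/2 + 1/2 + m) = (m:ℝ)+1 by ring] at h
    rw [← h]
    refine Finset.sum_congr rfl fun k hk => ?_
    rw [← hgj (m-k)]
  have hS2 : ∑ k ∈ Finset.range (m+1),
      (m.choose k : ℝ) * ((2*(k:ℝ)+1) * g k) * g (m-k) = ((m:ℝ)+1)^m := by
    rw [← hS1, ← Finset.sum_range_reflect
      (fun j => (m.choose j : ℝ) * g j * ((2*((m-j:ℕ):ℝ)+1) * g (m-j))) (m+1)]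
    refine Finset.sum_congr rfl fun k hk => ?_
    have hk' : k ≤ m := by have := Finset.mem_range.mp hk; omega
    rw [show m+1-1-k = m-k from by omega, Nat.choose_symm hk',
      show m-(m-k) = k from by omega]
    ring
  have hterm : ∀ k ∈ Finset.range (m+1),
      (m.choose k : ℝ) * g k * ((2*((m-k:ℕ):ℝ)+1) * g (m-k))
        + (m.choose k : ℝ) * ((2*(k:ℝ)+1) * g k) * g (m-k)
      = (2*(m:ℝ)+2) * ((m.choose k : ℝ) * g k * g (m-k)) := by
    intro k hk
    have hk' : k ≤ m := by have := Finset.mem_range.mp hk; omega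
    rw [Nat.cast_sub hk']
    ring
  have hsum : (2*(m:ℝ)+2) * (∑ k ∈ Finset.range (m+1), (m.choose k : ℝ) * g k * g (m-k))
      = 2*((m:ℝ)+1)^m := by
    rw [Finset.mul_sum, ← Finset.sum_congr rfl hterm, Finset.sum_add_distrib, hS1, hS2]
    ring
  rw [eq_div_iff (by positivity : ((m:ℝ)+1) ≠ 0)]
  linear_combination (1/2) * hsum

lemma F_eq : ∀ n, F n = 2^n * g n / (n.factorial : ℝ) := by
  intro n
  induction n using Nat.strong_induction_on with
  | _ n ih =>
    match n with
    | 0 => rw [F_zero]; norm_num [g_zero]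
    | n+1 =>
      rw [F_succ]
      have hstep : ∀ k ∈ Finset.range (n+1), F k * F (n-k)
          = ((2:ℝ)^n / (n.factorial : ℝ)) * ((n.choose k : ℝ) * g k * g (n-k)) := by
        intro k hk
        have hk' : k ≤ n := by have := Finset.mem_range.mp hk; omega
        rw [ih k (by omega), ih (n-k) (by omega)]
        have hfac : ((n.choose k : ℝ)) * (k.factorial : ℝ) * ((n-k).factorial : ℝ)
            = (n.factorial : ℝ) := by
          exact_mod_cast Nat.choose_mul_factorial_mul_factorial hk'
        have h2 : (2:ℝ)^k * 2^(n-k) = 2^n := by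
          rw [← pow_add, show k + (n-k) = n by omega]
        have h1 : ((k.factorial : ℝ)) ≠ 0 := Nat.cast_ne_zero.mpr k.factorial_ne_zero
        have h3 : (((n-k).factorial : ℝ)) ≠ 0 := Nat.cast_ne_zero.mpr (n-k).factorial_ne_zero
        have h4 : ((n.factorial : ℝ)) ≠ 0 := Nat.cast_ne_zero.mpr n.factorial_ne_zero
        rw [div_mul_div_comm, div_mul_eq_mul_div, div_eq_div_iff (mul_ne_zero h1 h3) h4]
        linear_combination (g k * g (n-k) * (n.factorial:ℝ)) * h2
          - ((2:ℝ)^n * g k * g (n-k)) * hfac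
      rw [Finset.sum_congr rfl hstep, ← Finset.mul_sum, B_eq]
      have e1 : ((n+1).factorial : ℝ) = ((n:ℝ)+1) * (n.factorial : ℝ) := by
        rw [Nat.factorial_succ]; push_cast; ring
      have e2 : g (n+1) = ((2*(n:ℝ)+3)/2)^(n+1) / (2*(n:ℝ)+3) := by
        rw [g]
        norm_num
        rw [show ((1:ℝ)/2 + ((n:ℝ)+1)) = (2*(n:ℝ)+3)/2 by ring,
          show (2*((n:ℝ)+1)+1) = 2*(n:ℝ)+3 by ring]
      have e3 : ((1:ℝ) + 1 / (2 * ((n:ℝ) + 1))) = (2*(n:ℝ)+3)/(2*((n:ℝ)+1)) := by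
        rw [eq_div_iff (by positivity : (2*((n:ℝ)+1)) ≠ 0)]; field_simp; ring
      rw [e3, e2, e1, div_pow, div_pow, mul_pow]
      have ha : (2*(n:ℝ)+3) ≠ 0 := by positivity
      have hb : ((n:ℝ)+1) ≠ 0 := by positivity
      have hc : (2:ℝ)^n ≠ 0 := by positivity
      have hd : ((n:ℝ)+1)^n ≠ 0 := by positivity
      have h4 : ((n.factorial:ℝ)) ≠ 0 := Nat.cast_ne_zero.mpr n.factorial_ne_zero
      rw [pow_succ (2*(n:ℝ)+3), pow_succ (2:ℝ)]
      field_simp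
/-- Han's Corollary 2: the specialization `z = 1/2` of Han's hook length
formula for binary trees. -/
theorem han_hook_length_half (n : ℕ) (hn : 1 ≤ n) :
    ∑' T : {T : BinTree // T.size = n},
      ((T.1.hooks).map (fun h => ((1 : ℝ) + 1 / (2 * h)) ^ (h - 1))).prod
      = (2 * (n : ℝ) + 1) ^ (n - 1) / (Nat.factorial n : ℝ) := by
  haveI : Fintype {T : BinTree // T.size = n} :=
    Fintype.subtype (allTrees n) (fun T => mem_allTrees)
  rw [tsum_fintype]
  have h1 : ∑ T : {T : BinTree // T.size = n},
      ((T.1.hooks).map (fun h => ((1 : ℝ) + 1 / (2 * h)) ^ (h - 1))).prod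
      = ∑ T ∈ allTrees n, W T :=
    (Finset.sum_subtype (allTrees n) (fun T => mem_allTrees) W).symm
  rw [h1]
  show F n = _
  rw [F_eq]
  obtain ⟨m, rfl⟩ : ∃ m, n = m + 1 := ⟨n-1, by omega⟩
  rw [g]
  have h2 : (2:ℝ)^(m+1) * ((1/2+(((m+1):ℕ):ℝ))^(m+1) / (2*(((m+1):ℕ):ℝ)+1))
      = (2*(((m+1):ℕ):ℝ)+1)^m := by
    rw [mul_div_assoc', ← mul_pow,
      show (2:ℝ) * (1/2+(((m+1):ℕ):ℝ)) = 2*(((m+1):ℕ):ℝ)+1 by push_cast; ring,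
      pow_succ, mul_div_cancel_right₀]
    positivity
  rw [h2, show m+1-1 = m from rfl]
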